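/- Two-machine feasibility characterization: let E = {J_1,…,J_{k'}} be a set of jobs of a two-machine JIT flow-shop instance whose due dates are pairwise distinct and numbered so that d_1 < d_2 < … < d_{k'}, and set d_0 = 0. Then E is feasible if and only if for every i ∈ {1,…,k'}: max(Σ_{l=1}^{i} p^(1)_l, d_{i−1}) + p^(2)_i ≤ d_i. -/

import Mathlib

open Finset

/-- A just-in-time flow-shop instance on `m` machines with jobs of type `J`:
`p i j` is the (positive integer) processing time of job `j` on machine `i`,
`d j` its positive integer due date and `w j` its positive integer weight. -/
structure JITInstance (m : ℕ) (J : Type) where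
  p : Fin m → J → ℕ
  d : J → ℕ
  w : J → ℕ
  p_pos : ∀ i j, 0 < p i j
  d_pos : ∀ j, 0 < d j
  w_pos : ∀ j, 0 < w j

/-- `S` is a JIT schedule of the job set `E`: on every machine the processing
intervals `(S i j, S i j + p i j]` of distinct jobs of `E` are pairwise disjoint,
each job's operation on machine `i+1` starts no earlier than its completion on
machine `i`, and every job of `E` completes on the last machine exactly at its
due date.  (Start times are nonnegative automatically, being naturals.) -/
def IsJITSchedule {m : ℕ} {J : Type} (I : JITInstance m J)
    (E : Finset J) (S : Fin m → J → ℕ) : Prop :=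
  (∀ i : Fin m, ∀ j ∈ E, ∀ j' ∈ E, j ≠ j' →
      S i j + I.p i j ≤ S i j' ∨ S i j' + I.p i j' ≤ S i j) ∧
  (∀ j ∈ E, ∀ i i' : Fin m, i'.val = i.val + 1 →
      S i j + I.p i j ≤ S i' j) ∧
  (∀ j ∈ E, ∀ i : Fin m, i.val = m - 1 →
      S i j + I.p i j = I.d j)

/-- A job set is feasible if it admits a JIT schedule. -/
def Feasible {m : ℕ} {J : Type} (I : JITInstance m J) (E : Finset J) : Prop :=
  ∃ S : Fin m → J → ℕ, IsJITSchedule I E S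

/-- Pairwise disjoint intervals `(S a, S a + p a]` all contained in `[0, T]`
have total length at most `T`. -/
lemma jit_sum_le_of_disjoint {α : Type*} [DecidableEq α] (s : Finset α) :
    ∀ (T : ℕ) (S p : α → ℕ),
      (∀ a ∈ s, 0 < p a) →
      (∀ a ∈ s, ∀ b ∈ s, a ≠ b → S a + p a ≤ S b ∨ S b + p b ≤ S a) →
      (∀ a ∈ s, S a + p a ≤ T) →
      ∑ a ∈ s, p a ≤ T := by
  induction s using Finset.strongInduction with
  | _ s ih =>
    intro T S p hpos hdisj hbd
    rcases s.eq_empty_or_nonempty with rfl | hne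
    · simp
    · obtain ⟨a, ha, hmax⟩ := s.exists_max_image (fun a => S a + p a) hne
      have hsub : s.erase a ⊂ s := Finset.erase_ssubset ha
      have h1 : ∑ b ∈ s.erase a, p b ≤ S a := by
        apply ih _ hsub (S a) S p
        · intro b hb; exact hpos b (Finset.mem_of_mem_erase hb)
        · intro b hb c hc hbc
          exact hdisj b (Finset.mem_of_mem_erase hb) c (Finset.mem_of_mem_erase hc) hbc
        · intro b hb
          have hbs := Finset.mem_of_mem_erase hb
          have hne' : b ≠ a := Finset.ne_of_mem_erase hb
          rcases hdisj b hbs a ha hne' with hc | hc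
          · exact hc
          · have h2 := hmax b hbs
            have h3 := hpos b hbs
            omega
      have h4 : ∑ b ∈ s.erase a, p b + p a = ∑ b ∈ s, p b :=
        Finset.sum_erase_add s p ha
      have h5 := hbd a ha
      omega

/-- two-machine feasibility characterization.  A set of jobs
`e 0, …, e (k'-1)` with strictly increasing due dates is feasible iff for every
`i`, `max(∑_{l ≤ i} p¹_l, d_{i-1}) + p²_i ≤ d_i` (with `d_{-1} = 0`). -/
theorem jit_two_machines_feasibility_iff {J : Type} [DecidableEq J] {k' : ℕ}
    (I : JITInstance 2 J) (e : Fin k' ↪ J)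
    (hmono : StrictMono fun l => I.d (e l)) :
    Feasible I (Finset.univ.map e) ↔
      ∀ i : Fin k',
        max (∑ l ∈ Finset.Iic i, I.p 0 (e l))
            (if i.val = 0 then 0
             else I.d (e ⟨i.val - 1, lt_of_le_of_lt (Nat.sub_le _ _) i.isLt⟩))
          + I.p 1 (e i) ≤ I.d (e i) := by
  have hIic : ∀ l : Fin k',
      ∑ t ∈ Finset.Iic l, I.p 0 (e t)
        = ∑ t ∈ Finset.Iio l, I.p 0 (e t) + I.p 0 (e l) := by
    intro l
    rw [← Finset.Iio_insert, Finset.sum_insert (by simp)]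
    ring
  constructor
  · rintro ⟨S, hdisj, hprec, hdue⟩ i
    have hEi : ∀ l : Fin k', e l ∈ Finset.univ.map e := fun l =>
      Finset.mem_map_of_mem e (Finset.mem_univ l)
    have hdue1 : ∀ l, S 1 (e l) + I.p 1 (e l) = I.d (e l) := fun l =>
      hdue (e l) (hEi l) 1 rfl
    have hclaim : ∀ l, l < i → I.d (e l) ≤ S 1 (e i) := by
      intro l hl
      have hne : e l ≠ e i := fun h => (ne_of_lt hl) (e.injective h)
      rcases hdisj 1 (e l) (hEi l) (e i) (hEi i) hne with hc | hc
      · rw [hdue1 l] at hc; exact hc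
      · have h1 := hdue1 l
        have h2 := hdue1 i
        have h3 : I.d (e l) < I.d (e i) := hmono hl
        have h4 := I.p_pos 1 (e l)
        omega
    have hsum : ∑ l ∈ Finset.Iic i, I.p 0 (e l) ≤ S 1 (e i) := by
      apply jit_sum_le_of_disjoint _ _ (fun l => S 0 (e l)) _
      · intro l _; exact I.p_pos 0 (e l)
      · intro l _ l' _ hll'
        exact hdisj 0 (e l) (hEi l) (e l') (hEi l') (fun h => hll' (e.injective h))
      · intro l hl
        have hp := hprec (e l) (hEi l) 0 1 rfl
        rcases eq_or_lt_of_le (Finset.mem_Iic.mp hl) with rfl | hlt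
        · exact hp
        · have h1 := hclaim l hlt
          have h2 := hdue1 l
          omega
    have hdi := hdue1 i
    rcases le_total (∑ l ∈ Finset.Iic i, I.p 0 (e l))
        (if i.val = 0 then 0
         else I.d (e ⟨i.val - 1, lt_of_le_of_lt (Nat.sub_le _ _) i.isLt⟩)) with hAB | hAB
    · rw [max_eq_right hAB]
      split_ifs with h0
      · omega
      · have hlt : (⟨i.val - 1, lt_of_le_of_lt (Nat.sub_le _ _) i.isLt⟩ : Fin k') < i := by
          rw [Fin.lt_def]; simp; omega
        have := hclaim _ hlt
        omega
    · rw [max_eq_left hAB]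
      omega
  · intro h
    classical
    have hp1le : ∀ l : Fin k', I.p 1 (e l) ≤ I.d (e l) := fun l =>
      le_trans (Nat.le_add_left _ _) (h l)
    have hsum_le : ∀ l : Fin k',
        ∑ t ∈ Finset.Iic l, I.p 0 (e t) + I.p 1 (e l) ≤ I.d (e l) := by
      intro l
      have h1 := h l
      exact le_trans (add_le_add_left (le_max_left _ _) _) h1
    have hdprev : ∀ l : Fin k', ∀ hl : l.val ≠ 0,
        I.d (e ⟨l.val - 1, lt_of_le_of_lt (Nat.sub_le _ _) l.isLt⟩) + I.p 1 (e l)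
          ≤ I.d (e l) := by
      intro l hl
      have h1 := h l
      have h2 := le_trans (add_le_add_left (le_max_right _ _) _) h1
      rwa [if_neg hl] at h2
    refine ⟨fun i => if i.val = 0
        then Function.extend e (fun l => ∑ t ∈ Finset.Iio l, I.p 0 (e t)) (fun _ => 0)
        else Function.extend e (fun l => I.d (e l) - I.p 1 (e l)) (fun _ => 0),
      ?_, ?_, ?_⟩
    · -- disjointness
      intro i j hj j' hj' hne
      simp only [Finset.mem_map, Finset.mem_univ, true_and] at hj hj'
      obtain ⟨l, rfl⟩ := hj
      obtain ⟨l', rfl⟩ := hj'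
      have hll' : l ≠ l' := fun hc => hne (congrArg e hc)
      have key0 : ∀ a b : Fin k', a < b →
          (∑ t ∈ Finset.Iio a, I.p 0 (e t)) + I.p 0 (e a)
            ≤ ∑ t ∈ Finset.Iio b, I.p 0 (e t) := by
        intro a b hab
        rw [← hIic a]
        exact Finset.sum_le_sum_of_subset (fun t ht =>
          Finset.mem_Iio.mpr (lt_of_le_of_lt (Finset.mem_Iic.mp ht) hab))
      have key1 : ∀ a b : Fin k', a < b →
          (I.d (e a) - I.p 1 (e a)) + I.p 1 (e a)
            ≤ I.d (e b) - I.p 1 (e b) := by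
        intro a b hab
        have hb0 : b.val ≠ 0 := by
          have := hab
          rw [Fin.lt_def] at this
          omega
        have hale : a ≤ (⟨b.val - 1, lt_of_le_of_lt (Nat.sub_le _ _) b.isLt⟩ : Fin k') := by
          rw [Fin.le_def]; simp
          rw [Fin.lt_def] at hab; omega
        have h1 : I.d (e a) ≤ I.d (e ⟨b.val - 1, lt_of_le_of_lt (Nat.sub_le _ _) b.isLt⟩) :=
          hmono.monotone hale
        have h2 := hdprev b hb0
        have h3 := hp1le a
        have h4 := hp1le b
        omega
      have hi2 := i.isLt
      rcases (by omega : i.val = 0 ∨ i.val = 1) with hi | hi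
      · have : i = (0 : Fin 2) := Fin.ext hi
        subst this
        simp only [Fin.val_zero, reduceIte, e.injective.extend_apply]
        rcases lt_or_gt_of_ne hll' with hc | hc
        · exact Or.inl (key0 l l' hc)
        · exact Or.inr (key0 l' l hc)
      · have : i = (1 : Fin 2) := Fin.ext hi
        subst this
        simp only [Fin.val_one, Nat.one_ne_zero, reduceIte, e.injective.extend_apply]
        rcases lt_or_gt_of_ne hll' with hc | hc
        · exact Or.inl (key1 l l' hc)
        · exact Or.inr (key1 l' l hc)
    · -- precedence
      intro j hj i i' hii'
      simp only [Finset.mem_map, Finset.mem_univ, true_and] at hj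
      obtain ⟨l, rfl⟩ := hj
      have hi : i = (0 : Fin 2) := Fin.ext (by have := i.isLt; have := i'.isLt; omega)
      have hi' : i' = (1 : Fin 2) := Fin.ext (by have := i.isLt; have := i'.isLt; omega)
      subst hi; subst hi'
      simp only [Fin.val_zero, Fin.val_one, Nat.one_ne_zero, reduceIte,
        e.injective.extend_apply]
      have h1 := hsum_le l
      rw [hIic l] at h1
      have h2 := hp1le l
      omega
    · -- due dates
      intro j hj i hi
      simp only [Finset.mem_map, Finset.mem_univ, true_and] at hj
      obtain ⟨l, rfl⟩ := hj
      have : i = (1 : Fin 2) := Fin.ext (by omega)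
      subst this
      simp only [Fin.val_one, Nat.one_ne_zero, reduceIte, e.injective.extend_apply]
      exact Nat.sub_add_cancel (hp1le l)
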